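/- With the above notation, for i = 1,...,d one has ∂P ∩ K_i = P_i, where P_i = conv({v_j : 1 ≤ j ≤ s, the i-th coordinate of v_j is 0}) and K_i = {x ∈ S : x_i = 0}. -/

import Mathlib

/-- With `P = conv(v 1, …, v s)`, `S = conv(0, v 1, …, v d)` (`v i = a i • e i` for
`i ≤ d`, and `⟨v i, α₀⟩ < 1`, `v i ∈ ℕ^d` for `i > d`), for each `i` one has
`∂P ∩ K i = P i`, where `K i = {x ∈ S : x i = 0}` and
`P i = conv({v j : the i-th coordinate of v j is 0})`. -/
theorem boundary_inter_face (d s : ℕ) (hd : 0 < d) (hds : d ≤ s)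
    (a : Fin d → ℕ) (ha : ∀ i, 0 < a i)
    (v : Fin s → (Fin d → ℝ))
    (hv1 : ∀ i : Fin d, v (Fin.castLE hds i) = Pi.single i (a i : ℝ))
    (hvnat : ∀ i j, ∃ m : ℕ, v i j = (m : ℝ))
    (hlt : ∀ i : Fin s, d ≤ (i : ℕ) → ∑ j, v i j / (a j : ℝ) < 1)
    (i : Fin d) :
    intrinsicFrontier ℝ (convexHull ℝ (Set.range v)) ∩
        {x ∈ convexHull ℝ
          (insert 0 (Set.range fun i : Fin d => v (Fin.castLE hds i))) | x i = 0} =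
      convexHull ℝ {x | (∃ j, v j = x) ∧ x i = 0} := by
  have hnn : ∀ j k, 0 ≤ v j k := by
    intro j k
    obtain ⟨m, hm⟩ := hvnat j k
    rw [hm]; positivity
  have hPnn : ∀ k : Fin d, ∀ x ∈ convexHull ℝ (Set.range v), 0 ≤ x k := by
    intro k x hx
    have hconv : Convex ℝ {y : Fin d → ℝ | 0 ≤ y k} := by
      intro p hp q hq α β hα hβ hαβ
      simp only [Set.mem_setOf_eq] at *
      have : (α • p + β • q) k = α * p k + β * q k := rfl
      rw [this]; positivity
    exact convexHull_min (by rintro _ ⟨j, rfl⟩; exact hnn j k) hconv hx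
  -- face argument : P ∩ {x i = 0} ⊆ P_i
  have hface : ∀ x ∈ convexHull ℝ (Set.range v), x i = 0 →
      x ∈ convexHull ℝ {x : Fin d → ℝ | (∃ j, v j = x) ∧ x i = 0} := by
    intro x hx hxi
    rw [convexHull_eq] at hx
    obtain ⟨ι, t, w, z, hw0, hw1, hz, hcm⟩ := hx
    have hzx : ∀ k ∈ t, 0 ≤ z k i := by
      intro k hk
      obtain ⟨j, hj⟩ := hz k hk
      rw [← hj]; exact hnn j i
    have hx' : ∑ k ∈ t, w k • z k = x := by
      rw [← Finset.centerMass_eq_of_sum_1 _ _ hw1, hcm]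
    have hsum0 : ∑ k ∈ t, w k * z k i = 0 := by
      have h := congrFun hx' i
      simpa [Finset.sum_apply] using h.trans hxi
    have hzero : ∀ k ∈ t, w k * z k i = 0 :=
      (Finset.sum_eq_zero_iff_of_nonneg
        (fun k hk => mul_nonneg (hw0 k hk) (hzx k hk))).1 hsum0
    rw [← hcm, ← Finset.centerMass_filter_ne_zero z]
    refine Finset.centerMass_mem_convexHull _
      (fun k hk => hw0 k (Finset.mem_filter.1 hk).1) ?_ ?_
    · rw [Finset.sum_filter_ne_zero, hw1]; norm_num
    · intro k hk
      obtain ⟨hk1, hk2⟩ := Finset.mem_filter.1 hk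
      obtain ⟨j, hj⟩ := hz k hk1
      refine ⟨⟨j, hj⟩, ?_⟩
      rcases mul_eq_zero.1 (hzero k hk1) with h | h
      · exact absurd h hk2
      · exact h
  -- every vertex lies in S
  have hvS : ∀ j : Fin s, v j ∈ convexHull ℝ
      (insert (0 : Fin d → ℝ) (Set.range fun i : Fin d => v (Fin.castLE hds i))) := by
    intro j
    rcases lt_or_ge (j : ℕ) d with hj | hj
    · apply subset_convexHull
      refine Set.mem_insert_iff.2 (Or.inr ⟨⟨(j : ℕ), hj⟩, ?_⟩)
      congr 1
    · set w : Option (Fin d) → ℝ :=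
        fun o => o.elim (1 - ∑ k, v j k / (a k : ℝ)) (fun k => v j k / (a k : ℝ)) with hw
      set p : Option (Fin d) → (Fin d → ℝ) :=
        fun o => o.elim 0 (fun k => v (Fin.castLE hds k)) with hp
      have hw0 : ∀ o ∈ (Finset.univ : Finset (Option (Fin d))), 0 ≤ w o := by
        rintro (_ | k) -
        · simp only [hw, Option.elim]
          linarith [hlt j hj]
        · simp only [hw, Option.elim]
          have := hnn j k
          have := (ha k)
          positivity
      have hw1 : ∑ o : Option (Fin d), w o = 1 := by
        rw [Fintype.sum_option]
        simp only [hw, Option.elim]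
        ring
      have hmem := Finset.centerMass_mem_convexHull (Finset.univ : Finset (Option (Fin d)))
        hw0 (by rw [hw1]; norm_num)
        (s := insert (0 : Fin d → ℝ) (Set.range fun i : Fin d => v (Fin.castLE hds i)))
        (z := p) ?_
      · have hcm : Finset.univ.centerMass w p = v j := by
          rw [Finset.centerMass_eq_of_sum_1 _ _ hw1, Fintype.sum_option]
          simp only [hp, Option.elim, smul_zero, zero_add]
          funext m
          rw [Finset.sum_apply]
          have hterm : ∀ k : Fin d,
              (w (some k) • v (Fin.castLE hds k)) m
                = (v j k / (a k : ℝ)) * (Pi.single k ((a k : ℝ)) : Fin d → ℝ) m := by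
            intro k
            simp [hw, hv1 k]
          rw [Finset.sum_congr rfl fun k _ => hterm k]
          rw [Finset.sum_eq_single m]
          · rw [Pi.single_eq_same]
            have hne : ((a m : ℝ)) ≠ 0 := by
              exact_mod_cast (ha m).ne'
            field_simp
          · intro b _ hb
            simp [Pi.single_eq_of_ne hb.symm]
          · intro h
            exact absurd (Finset.mem_univ m) h
        rwa [hcm] at hmem
      · rintro (_ | k) -
        · exact Set.mem_insert _ _
        · exact Set.mem_insert_iff.2 (Or.inr ⟨k, rfl⟩)
  -- points of P with x i = 0 are not in the intrinsic interior
  have hnotint : ∀ x ∈ convexHull ℝ (Set.range v), x i = 0 →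
      x ∉ intrinsicInterior ℝ (convexHull ℝ (Set.range v)) := by
    intro x hxP hxi hint
    rw [mem_intrinsicInterior] at hint
    obtain ⟨y, hy, hyx⟩ := hint
    have hviP : v (Fin.castLE hds i) ∈ convexHull ℝ (Set.range v) :=
      subset_convexHull _ _ ⟨_, rfl⟩
    have hxA : x ∈ affineSpan ℝ (convexHull ℝ (Set.range v)) := subset_affineSpan ℝ _ hxP
    have hviA : v (Fin.castLE hds i) ∈ affineSpan ℝ (convexHull ℝ (Set.range v)) :=
      subset_affineSpan ℝ _ hviP
    have hud : v (Fin.castLE hds i) - x ∈ (affineSpan ℝ (convexHull ℝ (Set.range v))).direction :=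
      AffineSubspace.vsub_mem_direction hviA hxA
    have hg : ∀ t : ℝ, (-t) • (v (Fin.castLE hds i) - x) + x ∈
        affineSpan ℝ (convexHull ℝ (Set.range v)) := by
      intro t
      have h1 : (-t) • (v (Fin.castLE hds i) - x) ∈
          (affineSpan ℝ (convexHull ℝ (Set.range v))).direction :=
        Submodule.smul_mem _ _ hud
      simpa using AffineSubspace.vadd_mem_of_mem_direction h1 hxA
    have hgc : Continuous (fun t : ℝ =>
        (⟨(-t) • (v (Fin.castLE hds i) - x) + x, hg t⟩ :
          affineSpan ℝ (convexHull ℝ (Set.range v)))) := by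
      apply Continuous.subtype_mk
      fun_prop
    have hopen : IsOpen ((fun t : ℝ =>
        (⟨(-t) • (v (Fin.castLE hds i) - x) + x, hg t⟩ :
          affineSpan ℝ (convexHull ℝ (Set.range v)))) ⁻¹'
        interior ((↑) ⁻¹' (convexHull ℝ (Set.range v)) :
          Set (affineSpan ℝ (convexHull ℝ (Set.range v))))) :=
      isOpen_interior.preimage hgc
    have h0 : (0 : ℝ) ∈ ((fun t : ℝ =>
        (⟨(-t) • (v (Fin.castLE hds i) - x) + x, hg t⟩ :
          affineSpan ℝ (convexHull ℝ (Set.range v)))) ⁻¹'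
        interior ((↑) ⁻¹' (convexHull ℝ (Set.range v)) :
          Set (affineSpan ℝ (convexHull ℝ (Set.range v))))) := by
      have heq : (⟨(-(0:ℝ)) • (v (Fin.castLE hds i) - x) + x, hg 0⟩ :
          affineSpan ℝ (convexHull ℝ (Set.range v))) = y := by
        apply Subtype.ext
        simp [hyx]
      rw [Set.mem_preimage, heq]
      exact hy
    obtain ⟨ε, hε, hball⟩ := Metric.isOpen_iff.1 hopen 0 h0
    have ht : (ε / 2) ∈ Metric.ball (0 : ℝ) ε := by
      simp only [Metric.mem_ball, Real.dist_eq, sub_zero]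
      rw [abs_of_pos (by linarith)]
      linarith
    have hmem : ((-(ε / 2)) • (v (Fin.castLE hds i) - x) + x) ∈ convexHull ℝ (Set.range v) := by
      have := interior_subset (hball ht)
      simpa using this
    have hcoord := hPnn i _ hmem
    have hui : (v (Fin.castLE hds i) - x) i = (a i : ℝ) := by
      simp [hv1 i, hxi]
    have heval : ((-(ε / 2)) • (v (Fin.castLE hds i) - x) + x) i = -(ε / 2) * (a i : ℝ) := by
      have h1 : ((-(ε / 2)) • (v (Fin.castLE hds i) - x) + x) i
          = (-(ε / 2)) * (v (Fin.castLE hds i) - x) i + x i := rfl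
      rw [h1, hui, hxi]; ring
    rw [heval] at hcoord
    have hai : (0 : ℝ) < (a i : ℝ) := by exact_mod_cast ha i
    nlinarith
  have hPclosed : IsClosed (convexHull ℝ (Set.range v)) :=
    (Set.Finite.isCompact_convexHull (𝕜 := ℝ) (Set.finite_range v)).isClosed
  ext x
  constructor
  · rintro ⟨hxF, _, hxi⟩
    exact hface x (intrinsicFrontier_subset hPclosed hxF) hxi
  · intro hx
    have hsub : {x : Fin d → ℝ | (∃ j, v j = x) ∧ x i = 0} ⊆ Set.range v :=
      fun y hy => hy.1
    have hxP : x ∈ convexHull ℝ (Set.range v) := convexHull_mono hsub hx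
    have hxi : x i = 0 := by
      have hconv : Convex ℝ {y : Fin d → ℝ | y i = 0} := by
        intro p hp q hq α β hα hβ hαβ
        simp only [Set.mem_setOf_eq] at *
        have : (α • p + β • q) i = α * p i + β * q i := rfl
        rw [this, hp, hq]; ring
      exact convexHull_min (fun y hy => hy.2) hconv hx
    refine ⟨?_, ?_, hxi⟩
    · rw [← closure_diff_intrinsicInterior]
      exact ⟨subset_closure hxP, hnotint x hxP hxi⟩
    · exact convexHull_min (by rintro _ ⟨j, rfl⟩; exact hvS j)
        (convex_convexHull _ _) hxP
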